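/- If (a,b) ∈ ℝ² is such that T_{ab} has at least one nonzero bounded orbit, then T_{ab} has a bounded orbit {v_n : n ∈ ℤ} attaining its supremum at n = 0, i.e. ‖v_0‖ = sup_{n∈ℤ} ‖T_{ab}^{(n)}(v_0)‖. -/

import Mathlib

/-- if T_{ab} has a nonzero bounded orbit, then it has a bounded
orbit attaining its supremum norm at n = 0. -/
theorem stmt6 (a b : ℝ)
    (F : ℝ → ℝ) (hF : ∀ x, F x = if x ≥ 0 then a * x else b * x)
    (T : ℝ × ℝ → ℝ × ℝ) (hT : ∀ p, T p = (F p.1 - p.2, p.1))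
    (hbdd : ∃ x : ℤ → ℝ,
      (∀ n : ℤ, T (x (n + 1), x n) = (x (n + 2), x (n + 1))) ∧
      (∃ n : ℤ, x n ≠ 0) ∧
      (∃ C : ℝ, ∀ n : ℤ, ‖((x (n + 1), x n) : ℝ × ℝ)‖ ≤ C)) :
    ∃ y : ℤ → ℝ,
      (∀ n : ℤ, T (y (n + 1), y n) = (y (n + 2), y (n + 1))) ∧
      (∃ n : ℤ, y n ≠ 0) ∧
      (∀ n : ℤ, ‖((y (n + 1), y n) : ℝ × ℝ)‖ ≤ ‖((y 1, y 0) : ℝ × ℝ)‖) := by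
  obtain ⟨x, hx, ⟨n₀, hn₀⟩, ⟨C, hC⟩⟩ := hbdd
  -- F is continuous
  have hFc : Continuous F := by
    have hFe : F = fun t => if (0:ℝ) ≤ t then a * t else b * t := by
      funext t; rw [hF]
    rw [hFe]
    exact Continuous.if_le (by continuity) (by continuity) continuous_const
      continuous_id (fun t ht => by rw [← ht]; ring)
  have hTc : Continuous T := by
    have : T = fun p => (F p.1 - p.2, p.1) := funext hT
    rw [this]
    exact ((hFc.comp continuous_fst).sub continuous_snd).prodMk continuous_fst
  -- inverse map
  set S : ℝ × ℝ → ℝ × ℝ := fun q => (q.2, F q.2 - q.1) with hS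
  have hSc : Continuous S :=
    continuous_snd.prodMk ((hFc.comp continuous_snd).sub continuous_fst)
  have hST : ∀ p, S (T p) = p := by
    intro p
    rw [hT, hS]
    exact Prod.ext rfl (by ring)
  have hTS : ∀ q, T (S q) = q := by
    intro q
    rw [hS, hT]
    exact Prod.ext (by ring) rfl
  set e : Equiv.Perm (ℝ × ℝ) := ⟨T, S, hST, hTS⟩ with he
  have he1 : ∀ p, e p = T p := fun p => rfl
  have he2 : ∀ p, e⁻¹ p = S p := fun p => rfl
  -- the invariant compact set
  set Sset : Set (ℝ × ℝ) := Set.range (fun n : ℤ => ((x (n + 1), x n) : ℝ × ℝ)) with hSset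
  have hTSset : T '' Sset ⊆ Sset := by
    rintro _ ⟨_, ⟨n, rfl⟩, rfl⟩
    refine ⟨n + 1, ?_⟩
    dsimp only
    rw [hx n, show n + 1 + 1 = n + 2 from by ring]
  have hSSset : S '' Sset ⊆ Sset := by
    rintro _ ⟨_, ⟨n, rfl⟩, rfl⟩
    refine ⟨n - 1, ?_⟩
    dsimp only
    have h1 : T (x (n - 1 + 1), x (n - 1)) = (x (n + 1), x n) := by
      rw [hx (n - 1), show n - 1 + 2 = n + 1 from by ring, show n - 1 + 1 = n from by ring]
    rw [← h1, hST]
  set K : Set (ℝ × ℝ) := closure Sset with hK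
  have hKne : K.Nonempty := ⟨(x (n₀ + 1), x n₀), subset_closure ⟨n₀, rfl⟩⟩
  have hKb : Bornology.IsBounded Sset := by
    rw [isBounded_iff_forall_norm_le]
    exact ⟨C, by rintro _ ⟨n, rfl⟩; exact hC n⟩
  have hKc : IsCompact K := Metric.isCompact_of_isClosed_isBounded isClosed_closure hKb.closure
  have hTK : ∀ p ∈ K, T p ∈ K := fun p hp =>
    closure_mono hTSset (image_closure_subset_closure_image hTc ⟨p, hp, rfl⟩)
  have hSK : ∀ p ∈ K, S p ∈ K := fun p hp =>
    closure_mono hSSset (image_closure_subset_closure_image hSc ⟨p, hp, rfl⟩)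
  -- maximum of the norm on K
  obtain ⟨v, hvK, hvmax⟩ := hKc.exists_isMaxOn hKne continuous_norm.continuousOn
  -- all iterates of v stay in K
  have hmem : ∀ n : ℤ, (e ^ n) v ∈ K := by
    intro n
    induction n using Int.induction_on with
    | zero => simpa using hvK
    | succ k ih =>
        have : (e ^ ((k : ℤ) + 1)) v = T ((e ^ (k : ℤ)) v) := by
          rw [show (k : ℤ) + 1 = 1 + k by ring, zpow_add, zpow_one,
            Equiv.Perm.mul_apply, he1]
        rw [this]; exact hTK _ ih
    | pred k ih =>
        have : (e ^ (-(k : ℤ) - 1)) v = S ((e ^ (-(k : ℤ))) v) := by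
          rw [show -(k : ℤ) - 1 = (-1) + (-k) by ring, zpow_add,
            Equiv.Perm.mul_apply, zpow_neg_one, he2]
        rw [this]; exact hSK _ ih
  -- define the orbit
  have hstep : ∀ n : ℤ, (e ^ (n + 1)) v = T ((e ^ n) v) := by
    intro n
    rw [show n + 1 = 1 + n by ring, zpow_add, zpow_one, Equiv.Perm.mul_apply, he1]
  have hpair : ∀ n : ℤ, ((((e ^ (n + 1)) v).2, ((e ^ n) v).2) : ℝ × ℝ) = (e ^ n) v := by
    intro n
    rw [hstep n, hT]
  have hv01 : ((((e ^ (1:ℤ)) v).2, ((e ^ (0:ℤ)) v).2) : ℝ × ℝ) = v := by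
    have h0 := hpair 0
    norm_num at h0
    simpa using h0
  refine ⟨fun n => ((e ^ n) v).2, ?_, ?_, ?_⟩
  · intro n
    have h2 := hpair (n + 1)
    rw [show n + 1 + 1 = n + 2 from by ring] at h2
    calc T (((e ^ (n+1)) v).2, ((e ^ n) v).2) = T ((e ^ n) v) := by rw [hpair n]
      _ = (e ^ (n+1)) v := (hstep n).symm
      _ = (((e ^ (n+2)) v).2, ((e ^ (n+1)) v).2) := h2.symm
  · by_contra h
    push_neg at h
    have hz : ∀ n : ℤ, ((e ^ n) v).2 = 0 := fun n => h n
    have hv : v = ((0:ℝ), (0:ℝ)) := by rw [← hv01, hz, hz]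
    have hp₀ : ((x (n₀ + 1), x n₀) : ℝ × ℝ) ∈ K := subset_closure ⟨n₀, rfl⟩
    have h1 : |x n₀| ≤ ‖v‖ := by
      have := hvmax hp₀
      calc |x n₀| = ‖((x (n₀ + 1), x n₀) : ℝ × ℝ).2‖ := (Real.norm_eq_abs _).symm
        _ ≤ ‖((x (n₀ + 1), x n₀) : ℝ × ℝ)‖ := norm_snd_le _
        _ ≤ ‖v‖ := this
    have hpos : (0:ℝ) < ‖v‖ := lt_of_lt_of_le (abs_pos.mpr hn₀) h1
    rw [hv] at hpos
    simp at hpos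
  · intro n
    calc ‖((((e ^ (n+1)) v).2, ((e ^ n) v).2) : ℝ × ℝ)‖ = ‖(e ^ n) v‖ := by rw [hpair n]
      _ ≤ ‖v‖ := hvmax (hmem n)
      _ = ‖((((e ^ (1:ℤ)) v).2, ((e ^ (0:ℤ)) v).2) : ℝ × ℝ)‖ := by rw [hv01]
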